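/- Let a, b, c, d ∈ ℂ with a·d − b·c ≠ 0 and let m(z) = (a·z + b)/(c·z + d). Then m commutes with the antipodal map z ↦ −1/conj(z), in the sense that m(−1/conj(z)) = −1/conj(m(z)) for every z ∈ ℂ with z ≠ 0, c·z + d ≠ 0, c·(−1/conj(z)) + d ≠ 0 and m(z) ≠ 0, if and only if there exist a₀, b₀ ∈ ℂ with |a₀|² + |b₀|² = 1 and λ ∈ ℂ, λ ≠ 0, such that (a, b, c, d) = (λ·a₀, λ·b₀, λ·conj(b₀), −λ·conj(a₀)). -/

import Mathlib

open Complex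

private lemma lin_finite (u v : ℂ) (huv : ¬(u = 0 ∧ v = 0)) :
    {z : ℂ | u * z + v = 0}.Finite := by
  rcases eq_or_ne u 0 with hu | hu
  · have hv : v ≠ 0 := fun hv => huv ⟨hu, hv⟩
    convert Set.finite_empty
    ext z; simp [hu, hv]
  · apply Set.Finite.subset (Set.finite_singleton (-v/u))
    intro z hz
    simp only [Set.mem_setOf_eq] at hz
    simp only [Set.mem_singleton_iff]
    field_simp
    linear_combination hz

private lemma lin_finite' (u v : ℂ) (huv : ¬(u = 0 ∧ v = 0)) :
    {z : ℂ | u * starRingEnd ℂ z + v = 0}.Finite := by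
  have : {z : ℂ | u * starRingEnd ℂ z + v = 0}
      = (fun z => starRingEnd ℂ z) ⁻¹' {w : ℂ | u * w + v = 0} := rfl
  rw [this]
  exact Set.Finite.preimage ((starRingEnd ℂ).injective.injOn) (lin_finite u v huv)

theorem stmt_13 (a b c d : ℂ) (h : a * d - b * c ≠ 0) :
    (∀ z : ℂ, z ≠ 0 → c * z + d ≠ 0 → c * (-1 / starRingEnd ℂ z) + d ≠ 0 →
      (a * z + b) / (c * z + d) ≠ 0 →
      (a * (-1 / starRingEnd ℂ z) + b) / (c * (-1 / starRingEnd ℂ z) + d)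
        = -1 / starRingEnd ℂ ((a * z + b) / (c * z + d))) ↔
    (∃ a₀ b₀ lam : ℂ, ‖a₀‖ ^ 2 + ‖b₀‖ ^ 2 = 1 ∧ lam ≠ 0 ∧
      a = lam * a₀ ∧ b = lam * b₀ ∧ c = lam * starRingEnd ℂ b₀ ∧
      d = -lam * starRingEnd ℂ a₀) := by
  constructor
  · intro hyp
    have hcd0 : ¬(c = 0 ∧ d = 0) := by rintro ⟨rfl, rfl⟩; simp at h
    have hab0 : ¬(a = 0 ∧ b = 0) := by rintro ⟨rfl, rfl⟩; simp at h
    have hdc0 : ¬(d = 0 ∧ -c = 0) := by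
      rintro ⟨rfl, hc⟩; rw [neg_eq_zero] at hc; subst hc; simp at h
    have hac0 : ¬(a = 0 ∧ c = 0) := by rintro ⟨rfl, rfl⟩; simp at h
    set B : Set ℂ := {0} ∪ {z | c * z + d = 0} ∪ {z | d * starRingEnd ℂ z + -c = 0}
        ∪ {z | a * z + b = 0} with hB
    have hBfin : B.Finite :=
      (((Set.finite_singleton 0).union (lin_finite c d hcd0)).union
        (lin_finite' d (-c) hdc0)).union (lin_finite a b hab0)
    set p : Polynomial ℂ := Polynomial.C (starRingEnd ℂ a * b + starRingEnd ℂ c * d) * Polynomial.X ^ 2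
      + Polynomial.C (b * starRingEnd ℂ b - a * starRingEnd ℂ a + d * starRingEnd ℂ d - c * starRingEnd ℂ c) * Polynomial.X
      + Polynomial.C (-(a * starRingEnd ℂ b + c * starRingEnd ℂ d)) with hp
    have hroot : ∀ z : ℂ, z ∉ B → p.IsRoot (starRingEnd ℂ z) := by
      intro z hzB
      simp only [hB, Set.mem_union, Set.mem_singleton_iff, Set.mem_setOf_eq, not_or] at hzB
      obtain ⟨⟨⟨hz, hcd⟩, hdc⟩, hab⟩ := hzB
      have hzc : starRingEnd ℂ z ≠ 0 := by simpa using hz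
      have h3 : c * (-1 / starRingEnd ℂ z) + d ≠ 0 := by
        have hrw : c * (-1 / starRingEnd ℂ z) + d
            = (d * starRingEnd ℂ z + -c) / starRingEnd ℂ z := by
          field_simp; ring
        rw [hrw]
        exact div_ne_zero hdc hzc
      have h4 : (a * z + b) / (c * z + d) ≠ 0 := div_ne_zero hab hcd
      have eq := hyp z hz hcd h3 h4
      have hnumc : starRingEnd ℂ (a * z + b) ≠ 0 := (map_ne_zero _).mpr hab
      rw [map_div₀, div_div_eq_mul_div, div_eq_div_iff h3 hnumc] at eq
      simp only [map_add, map_mul] at eq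
      field_simp at eq
      simp only [hp, Polynomial.IsRoot, Polynomial.eval_add, Polynomial.eval_mul,
        Polynomial.eval_pow, Polynomial.eval_C, Polynomial.eval_X]
      linear_combination eq
    have hp0 : p = 0 := by
      apply Polynomial.eq_zero_of_infinite_isRoot
      have hsub : (starRingEnd ℂ) '' Bᶜ ⊆ {x : ℂ | p.IsRoot x} := by
        rintro _ ⟨z, hz, rfl⟩
        exact hroot z hz
      exact Set.Infinite.mono hsub
        ((hBfin.infinite_compl).image ((starRingEnd ℂ).injective.injOn))
    have r1 : starRingEnd ℂ a * b + starRingEnd ℂ c * d = 0 := by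
      have := congrArg (fun q => Polynomial.coeff q 2) hp0
      simp only [hp, Polynomial.coeff_add, Polynomial.coeff_C_mul, Polynomial.coeff_X_pow,
        Polynomial.coeff_X, Polynomial.coeff_C, Polynomial.coeff_zero] at this
      simpa using this
    have r2 : b * starRingEnd ℂ b - a * starRingEnd ℂ a + d * starRingEnd ℂ d
        - c * starRingEnd ℂ c = 0 := by
      have := congrArg (fun q => Polynomial.coeff q 1) hp0
      simp only [hp, Polynomial.coeff_add, Polynomial.coeff_C_mul, Polynomial.coeff_X_pow,
        Polynomial.coeff_X, Polynomial.coeff_C, Polynomial.coeff_zero] at this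
      simpa using this
    set D := a * d - b * c with hDdef
    have hs : a * starRingEnd ℂ a + c * starRingEnd ℂ c ≠ 0 := by
      simp only [Complex.mul_conj]
      rw [← ofReal_add, Ne, ofReal_eq_zero]
      intro hh
      have ha : normSq a = 0 := by nlinarith [normSq_nonneg a, normSq_nonneg c]
      have hc : normSq c = 0 := by nlinarith [normSq_nonneg a, normSq_nonneg c]
      exact hac0 ⟨normSq_eq_zero.mp ha, normSq_eq_zero.mp hc⟩
    have e1 : b * (a * starRingEnd ℂ a + c * starRingEnd ℂ c) = -(D * starRingEnd ℂ c) := by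
      linear_combination a * r1
    have e1' : starRingEnd ℂ b * (a * starRingEnd ℂ a + c * starRingEnd ℂ c)
        = -(starRingEnd ℂ D * c) := by
      have := congrArg (starRingEnd ℂ) e1
      simp only [map_mul, map_add, map_neg, conj_conj] at this
      linear_combination this
    have e2 : d * (a * starRingEnd ℂ a + c * starRingEnd ℂ c) = D * starRingEnd ℂ a := by
      linear_combination c * r1
    have e2' : starRingEnd ℂ d * (a * starRingEnd ℂ a + c * starRingEnd ℂ c)
        = starRingEnd ℂ D * a := by
      have := congrArg (starRingEnd ℂ) e2
      simp only [map_mul, map_add, conj_conj] at this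
      linear_combination this
    have e1b : b * starRingEnd ℂ b * ((a * starRingEnd ℂ a + c * starRingEnd ℂ c)
        * (a * starRingEnd ℂ a + c * starRingEnd ℂ c))
        = D * starRingEnd ℂ D * (c * starRingEnd ℂ c) := by
      have := congrArg₂ (· * ·) e1 e1'
      linear_combination this
    have e1d : d * starRingEnd ℂ d * ((a * starRingEnd ℂ a + c * starRingEnd ℂ c)
        * (a * starRingEnd ℂ a + c * starRingEnd ℂ c))
        = D * starRingEnd ℂ D * (a * starRingEnd ℂ a) := by
      have := congrArg₂ (· * ·) e2 e2'
      linear_combination this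
    have keyDD : D * starRingEnd ℂ D * (a * starRingEnd ℂ a + c * starRingEnd ℂ c)
        = (a * starRingEnd ℂ a + c * starRingEnd ℂ c) * (a * starRingEnd ℂ a + c * starRingEnd ℂ c)
          * (a * starRingEnd ℂ a + c * starRingEnd ℂ c) := by
      linear_combination -e1b - e1d
        + ((a * starRingEnd ℂ a + c * starRingEnd ℂ c)
          * (a * starRingEnd ℂ a + c * starRingEnd ℂ c)) * r2
    have hDD : D * starRingEnd ℂ D
        = (a * starRingEnd ℂ a + c * starRingEnd ℂ c)
          * (a * starRingEnd ℂ a + c * starRingEnd ℂ c) :=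
      mul_right_cancel₀ hs keyDD
    set R : ℝ := normSq a + normSq b with hR
    have hRne : R ≠ 0 := by
      rw [hR]
      intro hh
      have ha : normSq a = 0 := by nlinarith [normSq_nonneg a, normSq_nonneg b]
      have hb : normSq b = 0 := by nlinarith [normSq_nonneg a, normSq_nonneg b]
      exact hab0 ⟨normSq_eq_zero.mp ha, normSq_eq_zero.mp hb⟩
    set Sr : ℝ := normSq a + normSq c with hSrdef
    have hSc : a * starRingEnd ℂ a + c * starRingEnd ℂ c = (Sr : ℂ) := by
      simp [hSrdef, Complex.mul_conj]
    have hSrne : Sr ≠ 0 := fun hh => hs (by rw [hSc, hh, ofReal_zero])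
    have hSrCne : (Sr : ℂ) ≠ 0 := ofReal_ne_zero.mpr hSrne
    have hnormD : normSq D = Sr ^ 2 := by
      have : ((normSq D : ℝ) : ℂ) = ((Sr ^ 2 : ℝ) : ℂ) := by
        rw [← Complex.mul_conj D, hDD, hSc]
        push_cast
        ring
      exact_mod_cast this
    obtain ⟨lam, hlam2⟩ := IsAlgClosed.exists_pow_nat_eq
        (-(D * (R : ℂ)) / (Sr : ℂ)) (n := 2) (by norm_num)
    have hnslam : normSq lam = R := by
      have h1 : normSq lam ^ 2 = R ^ 2 := by
        have h2 : normSq (lam ^ 2) = normSq (-(D * (R : ℂ)) / (Sr : ℂ)) := by rw [hlam2]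
        rw [map_pow, map_div₀, normSq_neg, normSq_mul, normSq_ofReal, normSq_ofReal,
          hnormD] at h2
        rw [h2]
        field_simp
      have hfac : (normSq lam - R) * (normSq lam + R) = 0 := by linear_combination h1
      rcases mul_eq_zero.mp hfac with hh | hh
      · linarith
      · have h3 := normSq_nonneg lam
        have h4 : 0 ≤ R := by rw [hR]; exact add_nonneg (normSq_nonneg a) (normSq_nonneg b)
        have : R = 0 := by linarith
        exact absurd this hRne
    have hlamne : lam ≠ 0 := by
      intro hh
      rw [hh, map_zero] at hnslam
      exact hRne hnslam.symm
    have hclamne : starRingEnd ℂ lam ≠ 0 := (map_ne_zero _).mpr hlamne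
    have hlc : lam * starRingEnd ℂ lam = (R : ℂ) := by
      rw [Complex.mul_conj, hnslam]
    have hl2S : lam ^ 2 * (Sr : ℂ) = -(D * (R : ℂ)) := by
      rw [hlam2]
      field_simp
    have hl2S' : (starRingEnd ℂ lam) ^ 2 * (Sr : ℂ) = -(starRingEnd ℂ D * (R : ℂ)) := by
      have := congrArg (starRingEnd ℂ) hl2S
      simp only [map_mul, map_pow, map_neg, Complex.conj_ofReal] at this
      linear_combination this
    have hkey : starRingEnd ℂ lam * (starRingEnd ℂ lam * (Sr : ℂ) + starRingEnd ℂ D * lam) = 0 := by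
      linear_combination hl2S' + starRingEnd ℂ D * hlc
    have hclamS : starRingEnd ℂ lam * (Sr : ℂ) = -(starRingEnd ℂ D * lam) := by
      rcases mul_eq_zero.mp hkey with hh | hh
      · exact absurd hh hclamne
      · linear_combination hh
    have e1'r : starRingEnd ℂ b * (Sr : ℂ) = -(starRingEnd ℂ D * c) := by rw [← hSc]; exact e1'
    have e2r : d * (Sr : ℂ) = D * starRingEnd ℂ a := by rw [← hSc]; exact e2
    have hDDr : D * starRingEnd ℂ D = (Sr : ℂ) * (Sr : ℂ) := by rw [hDD, hSc]
    refine ⟨a / lam, b / lam, lam, ?_, hlamne, ?_, ?_, ?_, ?_⟩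
    · rw [Complex.sq_norm, Complex.sq_norm, map_div₀, map_div₀, hnslam,
        ← add_div, ← hR]
      exact div_self hRne
    · field_simp
    · field_simp
    · rw [map_div₀, mul_div_assoc', eq_div_iff hclamne]
      apply mul_right_cancel₀ hSrCne
      linear_combination c * hclamS - lam * e1'r
    · rw [map_div₀, mul_div_assoc', eq_div_iff hclamne]
      apply mul_right_cancel₀ hSrCne
      apply mul_right_cancel₀ h
      linear_combination d * D * hclamS - lam * (Sr : ℂ) * e2r - lam * d * hDDr
  · rintro ⟨a₀, b₀, lam, hnorm, hlam, rfl, rfl, rfl, rfl⟩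
    intro z hz h2 h3 h4
    have hzc : starRingEnd ℂ z ≠ 0 := by simpa using hz
    have hnum : lam * a₀ * z + lam * b₀ ≠ 0 := fun hh => h4 (by rw [hh, zero_div])
    have hnumc : starRingEnd ℂ (lam * a₀ * z + lam * b₀) ≠ 0 := (map_ne_zero _).mpr hnum
    rw [map_div₀, div_div_eq_mul_div, div_eq_div_iff h3 hnumc]
    simp only [map_add, map_mul, map_neg, conj_conj]
    field_simp
    ring
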